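/- Continuity/counting part of Bauer–Fike: with A diagonalizable, A = PDP⁻¹, H arbitrary, ε = ‖P‖‖P⁻¹‖‖H‖, if I ⊆ {1,...,n} satisfies (∪_{i∈I} B(λ_i,ε)) ∩ (∪_{i∉I} B(λ_i,ε)) = ∅, then the number of eigenvalues of A+H (counted with multiplicity) lying in ∪_{i∈I} B(λ_i,ε) is exactly |I|. -/

import Mathlib

open Polynomial


lemma eval_charpoly' {n : ℕ} (M : Matrix (Fin n) (Fin n) ℂ) (z : ℂ) :
    (M.charpoly).eval z = (z • (1 : Matrix (Fin n) (Fin n) ℂ) - M).det := by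
  rw [Matrix.charpoly, ← Polynomial.coe_evalRingHom, RingHom.map_det]
  congr 1
  ext i j
  by_cases h : i = j <;>
    simp [h, Matrix.charmatrix_apply, Matrix.one_apply, Matrix.diagonal_apply]

lemma clm_opNorm_diagonal_le {n : ℕ} (c : Fin n → ℂ) (b : ℝ) (hb : 0 ≤ b)
    (h : ∀ i, ‖c i‖ ≤ b) :
    ‖Matrix.toEuclideanCLM (𝕜 := ℂ) (Matrix.diagonal c)‖ ≤ b := by
  refine ContinuousLinearMap.opNorm_le_bound _ hb fun x => ?_
  have happ : ∀ i, (Matrix.toEuclideanCLM (𝕜 := ℂ) (Matrix.diagonal c)) x i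
      = c i * x i := by
    intro i
    have : (Matrix.toEuclideanCLM (𝕜 := ℂ) (Matrix.diagonal c)) x i
        = (Matrix.toLin' (Matrix.diagonal c)) (WithLp.equiv _ _ x) i := rfl
    rw [this, Matrix.toLin'_apply, Matrix.mulVec_diagonal]
    rfl
  rw [EuclideanSpace.norm_eq, EuclideanSpace.norm_eq]
  calc √(∑ i, ‖(Matrix.toEuclideanCLM (𝕜 := ℂ) (Matrix.diagonal c)) x i‖ ^ 2)
      ≤ √(∑ i, b ^ 2 * ‖x i‖ ^ 2) := by
        apply Real.sqrt_le_sqrt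
        apply Finset.sum_le_sum
        intro i _
        rw [happ i, norm_mul]
        calc (‖c i‖ * ‖x i‖) ^ 2 = ‖c i‖^2 * ‖x i‖^2 := by ring
        _ ≤ b^2 * ‖x i‖^2 := by
            apply mul_le_mul_of_nonneg_right _ (by positivity)
            exact pow_le_pow_left₀ (norm_nonneg _) (h i) 2
    _ = b * √(∑ i, ‖x i‖ ^ 2) := by
        rw [← Finset.mul_sum, Real.sqrt_mul (by positivity), Real.sqrt_sq hb]

lemma ofFn_get_cast {α : Type*} (l : List α) {n : ℕ} (h : l.length = n) :
    List.ofFn (fun i : Fin n => l.get (Fin.cast h.symm i)) = l := by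
  subst h
  simp

lemma exists_root_vector {n : ℕ} (M : Matrix (Fin n) (Fin n) ℂ) :
    ∃ r : Fin n → ℂ, M.charpoly.roots = Multiset.map r Finset.univ.val ∧
      ∀ z : ℂ, M.charpoly.eval z = ∏ i, (z - r i) := by
  have hm : M.charpoly.Monic := M.charpoly_monic
  have hs : M.charpoly.Splits := IsAlgClosed.splits _
  have hcard : Multiset.card M.charpoly.roots = n := by
    rw [Polynomial.splits_iff_card_roots.mp hs, Matrix.charpoly_natDegree_eq_dim]
    simp
  set l : List ℂ := M.charpoly.roots.toList with hl
  have hlen : l.length = n := by rw [hl, Multiset.length_toList, hcard]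
  refine ⟨fun i => l.get (Fin.cast hlen.symm i), ?_, ?_⟩
  · have h1 : Multiset.map (fun i => l.get (Fin.cast hlen.symm i)) Finset.univ.val
        = (l : Multiset ℂ) := by
      rw [Fin.univ_def]
      show ((List.finRange n).map fun i => l.get (Fin.cast hlen.symm i) : Multiset ℂ) = _
      congr 1
      rw [← List.ofFn_eq_map, ofFn_get_cast l hlen]
    rw [h1, hl, Multiset.coe_toList]
  · intro z
    have hprod := hs.eq_prod_roots_of_monic hm
    rw [hprod]
    rw [Polynomial.eval_multiset_prod]
    have h1 : Multiset.map (fun i => l.get (Fin.cast hlen.symm i)) Finset.univ.val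
        = M.charpoly.roots := by
      rw [Fin.univ_def]
      show ((List.finRange n).map fun i => l.get (Fin.cast hlen.symm i) : Multiset ℂ) = _
      rw [← List.ofFn_eq_map, ofFn_get_cast l hlen]
      rw [hl, Multiset.coe_toList]
    rw [← h1, Multiset.map_map, Multiset.map_map]
    rw [Finset.prod_eq_multiset_prod]
    congr 1
    apply Multiset.map_congr rfl
    intro i _
    simp

lemma count_filter_map {n : ℕ} (r : Fin n → ℂ) (K : Set ℂ) [DecidablePred (· ∈ K)] :
    Multiset.card ((Multiset.map r Finset.univ.val).filter (· ∈ K))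
      = (Finset.univ.filter (fun i => r i ∈ K)).card := by
  rw [← Multiset.countP_eq_card_filter, Multiset.countP_map,
    Finset.card, Finset.filter_val]

lemma cont_eval {n : ℕ} (A H : Matrix (Fin n) (Fin n) ℂ) (z : ℂ) :
    Continuous fun t : ℝ => ((A + (t : ℂ) • H).charpoly).eval z := by
  simp only [eval_charpoly']
  apply Continuous.matrix_det
  exact continuous_const.sub (continuous_const.add
    ((Complex.continuous_ofReal).smul continuous_const))

lemma charpoly_conj_diag {n : ℕ} (P : Matrix (Fin n) (Fin n) ℂ) (hP : IsUnit P)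
    (d : Fin n → ℂ) :
    (P * Matrix.diagonal d * P⁻¹).charpoly = ∏ i, (X - C (d i)) := by
  have hPd : IsUnit P.det := (Matrix.isUnit_iff_isUnit_det P).mp hP
  have hPP' : P⁻¹ * P = 1 := Matrix.nonsing_inv_mul P hPd
  apply Polynomial.funext
  intro z
  rw [eval_charpoly']
  have hconj : P⁻¹ * (z • (1 : Matrix (Fin n) (Fin n) ℂ) - P * Matrix.diagonal d * P⁻¹) * P
      = z • (1 : Matrix (Fin n) (Fin n) ℂ) - Matrix.diagonal d := by
    rw [Matrix.mul_sub, Matrix.sub_mul]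
    congr 1
    · rw [Matrix.mul_smul, Matrix.smul_mul, Matrix.mul_one, hPP']
    · rw [Matrix.mul_assoc P (Matrix.diagonal d) P⁻¹,
        Matrix.nonsing_inv_mul_cancel_left _ _ hPd, Matrix.mul_assoc, hPP', Matrix.mul_one]
  have hdiag : z • (1 : Matrix (Fin n) (Fin n) ℂ) - Matrix.diagonal d
      = Matrix.diagonal (fun i => z - d i) := by
    ext i j
    by_cases h : i = j <;> simp [h, Matrix.diagonal_apply, Matrix.one_apply]
  rw [← Matrix.det_conj' hP (z • (1 : Matrix (Fin n) (Fin n) ℂ) - P * Matrix.diagonal d * P⁻¹),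
    hconj, hdiag, Matrix.det_diagonal]
  rw [Polynomial.eval_prod]
  simp

lemma roots_prod_X_sub_C' {n : ℕ} (d : Fin n → ℂ) :
    (∏ i, (X - C (d i))).roots = Multiset.map d Finset.univ.val := by
  rw [Finset.prod_eq_multiset_prod,
    show (Multiset.map (fun i => X - C (d i)) Finset.univ.val)
      = Multiset.map (fun a => X - C a) (Multiset.map d Finset.univ.val) from
      by rw [Multiset.map_map]; rfl,
    Polynomial.roots_multiset_prod_X_sub_C]

open scoped Matrix.Norms.L2Operator in
lemma bf_inclusion {n : ℕ} (A D H P : Matrix (Fin n) (Fin n) ℂ) (d : Fin n → ℂ)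
    (hP : IsUnit P) (hD : D = Matrix.diagonal d) (hA : A = P * D * P⁻¹)
    (ε : ℝ)
    (hε : ε = ‖Matrix.toEuclideanCLM (𝕜 := ℂ) P‖ * ‖Matrix.toEuclideanCLM (𝕜 := ℂ) P⁻¹‖ *
      ‖Matrix.toEuclideanCLM (𝕜 := ℂ) H‖)
    (hεnn : 0 ≤ ε)
    (t : ℝ) (ht0 : 0 ≤ t) (ht1 : t ≤ 1)
    (μ : ℂ) (hμ : μ ∈ (A + (t : ℂ) • H).charpoly.roots) :
    ∃ i, dist μ (d i) ≤ ε := by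
  have hε : ε = ‖P‖ * ‖P⁻¹‖ * ‖H‖ := hε
  have hPd : IsUnit P.det := (Matrix.isUnit_iff_isUnit_det P).mp hP
  have hPP : P * P⁻¹ = 1 := Matrix.mul_nonsing_inv P hPd
  have hPP' : P⁻¹ * P = 1 := Matrix.nonsing_inv_mul P hPd
  rcases Nat.eq_zero_or_pos n with hn | hn
  · subst hn
    have : (A + (t : ℂ) • H).charpoly = 1 := by
      have hm := (A + (t : ℂ) • H).charpoly_monic
      have hd : (A + (t : ℂ) • H).charpoly.natDegree = 0 := by
        rw [Matrix.charpoly_natDegree_eq_dim]; simp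
      exact hm.natDegree_eq_zero.mp hd
    rw [this] at hμ
    simp at hμ
  by_contra hcon
  push_neg at hcon
  -- evaluation is zero
  have heval : ((A + (t : ℂ) • H).charpoly).eval μ = 0 := (Polynomial.mem_roots'.mp hμ).2
  rw [eval_charpoly'] at heval
  set E : Matrix (Fin n) (Fin n) ℂ := P⁻¹ * H * P with hE
  have hconj : P⁻¹ * (μ • (1 : Matrix (Fin n) (Fin n) ℂ) - (A + (t : ℂ) • H)) * P
      = μ • (1 : Matrix (Fin n) (Fin n) ℂ) - (D + (t : ℂ) • E) := by
    rw [hA, hE]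
    rw [Matrix.mul_sub, Matrix.sub_mul, Matrix.mul_add, Matrix.add_mul]
    rw [Matrix.mul_smul, Matrix.smul_mul, Matrix.mul_one, hPP']
    rw [Matrix.mul_smul, Matrix.smul_mul]
    congr 2
    rw [Matrix.mul_assoc P D P⁻¹, Matrix.nonsing_inv_mul_cancel_left _ _ hPd,
      Matrix.mul_assoc, hPP', Matrix.mul_one]
  have hdet0 : (μ • (1 : Matrix (Fin n) (Fin n) ℂ) - (D + (t : ℂ) • E)).det = 0 := by
    rw [← hconj, Matrix.det_conj' hP, heval]
  -- diagonal resolvent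
  set G : Matrix (Fin n) (Fin n) ℂ := Matrix.diagonal (fun i => μ - d i) with hG
  have hGne : ∀ i, μ - d i ≠ 0 := by
    intro i
    have := lt_of_le_of_lt hεnn (hcon i)
    rw [Complex.dist_eq] at this
    intro h0
    rw [h0] at this
    simp at this
  set R : Matrix (Fin n) (Fin n) ℂ := Matrix.diagonal (fun i => (μ - d i)⁻¹) with hR
  have hGR : G * R = 1 := by
    rw [hG, hR, Matrix.diagonal_mul_diagonal]
    rw [show (fun i => (μ - d i) * (μ - d i)⁻¹) = fun _ => (1:ℂ) from
      funext fun i => mul_inv_cancel₀ (hGne i), Matrix.diagonal_one]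
  have hGsub : μ • (1 : Matrix (Fin n) (Fin n) ℂ) - D = G := by
    rw [hD, hG]
    ext i j
    by_cases h : i = j <;> simp [h, Matrix.diagonal_apply, Matrix.one_apply]
  -- minimum distance
  obtain ⟨i0⟩ : Nonempty (Fin n) := ⟨⟨0, hn⟩⟩
  set δ : ℝ := Finset.univ.inf' (Finset.univ_nonempty_iff.mpr ⟨i0⟩) (fun i => dist μ (d i)) with hδ
  have hεδ : ε < δ := by
    rw [hδ, Finset.lt_inf'_iff]
    exact fun i _ => hcon i
  have hδ0 : 0 < δ := lt_of_le_of_lt hεnn hεδ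
  have hRle : ‖R‖ ≤ δ⁻¹ := by
    refine clm_opNorm_diagonal_le _ _ (by positivity) fun i => ?_
    rw [norm_inv]
    rw [inv_le_inv₀ _ hδ0]
    · exact (Finset.inf'_le _ (Finset.mem_univ i)).trans_eq (Complex.dist_eq _ _)
    · have := lt_of_le_of_lt hεnn (hcon i); rwa [Complex.dist_eq] at this
  have hEle : ‖E‖ ≤ ε := by
    calc ‖P⁻¹ * H * P‖ ≤ ‖P⁻¹ * H‖ * ‖P‖ := norm_mul_le _ _
      _ ≤ ‖P⁻¹‖ * ‖H‖ * ‖P‖ := by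
          exact mul_le_mul_of_nonneg_right (norm_mul_le _ _) (norm_nonneg _)
      _ = ε := by rw [hε]; ring
  have hkey : ‖(t : ℂ) • (R * E)‖ < 1 := by
    rw [norm_smul]
    have h1 : ‖(t : ℂ)‖ ≤ 1 := by
      rw [Complex.norm_real, Real.norm_eq_abs, abs_of_nonneg ht0]; exact ht1
    have h2 : ‖R * E‖ ≤ δ⁻¹ * ε :=
      le_trans (norm_mul_le _ _)
        (mul_le_mul hRle hEle (norm_nonneg _) (by positivity))
    have h3 : δ⁻¹ * ε < 1 := by
      rw [← div_eq_inv_mul, div_lt_one hδ0]; exact hεδ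
    calc ‖(t:ℂ)‖ * ‖R * E‖ ≤ 1 * (δ⁻¹ * ε) :=
          mul_le_mul h1 h2 (norm_nonneg _) one_pos.le
      _ = δ⁻¹ * ε := one_mul _
      _ < 1 := h3
  have hU : IsUnit (1 - (t : ℂ) • (R * E)) := by
    exact ⟨Units.oneSub ((t : ℂ) • (R * E)) hkey, rfl⟩
  have hGU : IsUnit G := by
    rw [Matrix.isUnit_iff_isUnit_det, hG, Matrix.det_diagonal]
    exact isUnit_iff_ne_zero.mpr (Finset.prod_ne_zero_iff.mpr fun i _ => hGne i)
  have hfac : G * (1 - (t : ℂ) • (R * E)) = μ • (1 : Matrix (Fin n) (Fin n) ℂ) - (D + (t : ℂ) • E) := by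
    rw [Matrix.mul_sub, Matrix.mul_one, Matrix.mul_smul, ← Matrix.mul_assoc, hGR,
      Matrix.one_mul, ← hGsub]
    abel
  have : IsUnit (μ • (1 : Matrix (Fin n) (Fin n) ℂ) - (D + (t : ℂ) • E)) := by
    rw [← hfac]; exact hGU.mul hU
  rw [Matrix.isUnit_iff_isUnit_det] at this
  exact this.ne_zero hdet0


/-- Operator norm of a complex matrix induced by the Euclidean norm. -/
noncomputable def opNorm {n : ℕ} (A : Matrix (Fin n) (Fin n) ℂ) : ℝ :=
  ‖Matrix.toEuclideanCLM (𝕜 := ℂ) A‖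

open scoped Classical in
/-- Continuity/counting part of Bauer–Fike: if the union of balls indexed by `I` is
disjoint from the union of the other balls, then the number of eigenvalues of `A + H`
(counted with multiplicity) lying in `⋃_{i ∈ I} B(λ_i, ε)` is exactly `|I|`. -/
theorem bauer_fike_counting {n : ℕ} (A D H P : Matrix (Fin n) (Fin n) ℂ)
    (d : Fin n → ℂ) (hP : IsUnit P) (hD : D = Matrix.diagonal d)
    (hA : A = P * D * P⁻¹)
    (ε : ℝ) (hε : ε = opNorm P * opNorm P⁻¹ * opNorm H)
    (I : Finset (Fin n))
    (hdisj : Disjoint (⋃ i ∈ I, Metric.closedBall (d i) ε)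
      (⋃ i ∈ (Iᶜ : Finset (Fin n)), Metric.closedBall (d i) ε)) :
    Multiset.card ((A + H).charpoly.roots.filter
      (fun μ => μ ∈ ⋃ i ∈ I, Metric.closedBall (d i) ε)) = I.card := by
  have hεnn : 0 ≤ ε := by
    rw [hε]; unfold opNorm; positivity
  set K : Set ℂ := ⋃ i ∈ I, Metric.closedBall (d i) ε with hK
  set K' : Set ℂ := ⋃ i ∈ (Iᶜ : Finset (Fin n)), Metric.closedBall (d i) ε with hK'
  have hKcomp : IsCompact K := I.isCompact_biUnion fun i _ => isCompact_closedBall _ _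
  have hK'comp : IsCompact K' := Finset.isCompact_biUnion _ fun i _ => isCompact_closedBall _ _
  have hKclosed : IsClosed K := hKcomp.isClosed
  have hK'closed : IsClosed K' := hK'comp.isClosed
  have hmem : ∀ t : ℝ, t ∈ Set.Icc (0:ℝ) 1 →
      ∀ μ ∈ (A + (t:ℂ) • H).charpoly.roots, μ ∈ K ∪ K' := by
    intro t ht μ hμ
    obtain ⟨i, hi⟩ := bf_inclusion A D H P d hP hD hA ε (by rw [hε]; rfl) hεnn
      t ht.1 ht.2 μ hμ
    by_cases hiI : i ∈ I
    · exact Or.inl (Set.mem_iUnion₂.mpr ⟨i, hiI, Metric.mem_closedBall.mpr hi⟩)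
    · exact Or.inr (Set.mem_iUnion₂.mpr ⟨i, Finset.mem_compl.mpr hiI,
        Metric.mem_closedBall.mpr hi⟩)
  set f : ℝ → ℕ :=
    fun t => Multiset.card (((A + (t:ℂ) • H).charpoly.roots).filter (· ∈ K)) with hf
  -- local constancy on Icc 0 1
  have hloc : ∀ t0 ∈ Set.Icc (0:ℝ) 1,
      ∀ᶠ t in nhdsWithin t0 (Set.Icc (0:ℝ) 1), f t = f t0 := by
    intro t0 ht0
    by_contra hcon
    have hfreq : ∃ᶠ t in nhdsWithin t0 (Set.Icc (0:ℝ) 1), f t ≠ f t0 := by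
      rwa [Filter.not_eventually] at hcon
    have hseq : ∀ k : ℕ, ∃ t, (t ∈ Set.Icc (0:ℝ) 1 ∧ dist t t0 < 1/(k+1)) ∧ f t ≠ f t0 := by
      intro k
      have h1 : Metric.ball t0 (1/(k+1)) ∩ Set.Icc (0:ℝ) 1
          ∈ nhdsWithin t0 (Set.Icc (0:ℝ) 1) :=
        Filter.inter_mem (nhdsWithin_le_nhds (Metric.ball_mem_nhds t0 (by positivity)))
          self_mem_nhdsWithin
      have h2 : ∀ᶠ t in nhdsWithin t0 (Set.Icc (0:ℝ) 1),
          t ∈ Metric.ball t0 (1/(k+1)) ∩ Set.Icc (0:ℝ) 1 := h1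
      obtain ⟨t, hft, htm⟩ := (hfreq.and_eventually h2).exists
      exact ⟨t, ⟨htm.2, Metric.mem_ball.mp htm.1⟩, hft⟩
    choose u hu hfu using hseq
    have hu1 : ∀ k, u k ∈ Set.Icc (0:ℝ) 1 := fun k => (hu k).1
    have htend : Filter.Tendsto u Filter.atTop (nhds t0) := by
      rw [tendsto_iff_dist_tendsto_zero]
      exact squeeze_zero (fun k => dist_nonneg) (fun k => (hu k).2.le)
        tendsto_one_div_add_atTop_nhds_zero_nat
    -- root vectors
    have hrv : ∀ k : ℕ, ∃ r : Fin n → ℂ,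
        (A + ((u k : ℝ):ℂ) • H).charpoly.roots = Multiset.map r Finset.univ.val ∧
        ∀ z : ℂ, (A + ((u k : ℝ):ℂ) • H).charpoly.eval z = ∏ i, (z - r i) :=
      fun k => exists_root_vector _
    choose r hr1 hr2 using hrv
    have hrK : ∀ k i, r k i ∈ K ∪ K' := by
      intro k i
      apply hmem (u k) (hu1 k)
      rw [hr1 k]
      exact Multiset.mem_map.mpr ⟨i, by simp, rfl⟩
    -- pigeonhole on the index sets
    set J : ℕ → Finset (Fin n) := fun k => Finset.univ.filter (fun i => r k i ∈ K) with hJ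
    have hpigeon : ∃ Js : Finset (Fin n), ∃ᶠ k in Filter.atTop, J k = Js := by
      by_contra h
      push_neg at h
      have h2 : ∀ Js : Finset (Fin n), ∀ᶠ k in Filter.atTop, J k ≠ Js := fun Js => by
        have := h Js
        exact this
      have h3 : ∀ᶠ k in Filter.atTop, ∀ Js : Finset (Fin n), J k ≠ Js :=
        Filter.eventually_all.mpr h2
      obtain ⟨k, hk⟩ := h3.exists
      exact hk (J k) rfl
    obtain ⟨Js, hJs⟩ := hpigeon
    obtain ⟨φ1, hφ1mono, hφ1⟩ := Filter.extraction_of_frequently_atTop hJs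
    -- compactness
    have hpicomp : IsCompact (Set.univ.pi fun _ : Fin n => K ∪ K') :=
      isCompact_univ_pi fun _ => hKcomp.union hK'comp
    have hy : ∀ m : ℕ, (fun i => r (φ1 m) i) ∈ Set.univ.pi (fun _ : Fin n => K ∪ K') :=
      fun m => Set.mem_univ_pi.mpr fun i => hrK _ i
    obtain ⟨s, hs, φ2, hφ2mono, hφ2tend⟩ := hpicomp.tendsto_subseq hy
    have hcoord : ∀ i, Filter.Tendsto (fun m => r (φ1 (φ2 m)) i) Filter.atTop (nhds (s i)) :=
      fun i => tendsto_pi_nhds.mp hφ2tend i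
    have hts : Filter.Tendsto (fun m => u (φ1 (φ2 m))) Filter.atTop (nhds t0) :=
      htend.comp (hφ1mono.comp hφ2mono).tendsto_atTop
    -- limit polynomial
    have hq : ∀ z : ℂ, ((A + (t0:ℂ) • H).charpoly).eval z = ∏ i, (z - s i) := by
      intro z
      have hLHS : Filter.Tendsto
          (fun m => ((A + ((u (φ1 (φ2 m)) : ℝ):ℂ) • H).charpoly).eval z) Filter.atTop
          (nhds (((A + (t0:ℂ) • H).charpoly).eval z)) :=
        ((cont_eval A H z).tendsto t0).comp hts
      have hRHS : Filter.Tendsto (fun m => ∏ i, (z - r (φ1 (φ2 m)) i)) Filter.atTop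
          (nhds (∏ i, (z - s i))) :=
        tendsto_finset_prod _ fun i _ => tendsto_const_nhds.sub (hcoord i)
      refine tendsto_nhds_unique (hLHS.congr fun m => ?_) hRHS
      exact hr2 _ z
    have hq' : (A + (t0:ℂ) • H).charpoly = ∏ i, (X - C (s i)) :=
      Polynomial.funext fun z => by
        rw [hq z, Polynomial.eval_prod]; simp
    have hroots0 : (A + (t0:ℂ) • H).charpoly.roots = Multiset.map s Finset.univ.val := by
      rw [hq', roots_prod_X_sub_C']
    -- characterize membership of the limit
    have hsK : ∀ i, (i ∈ Js ↔ s i ∈ K) := by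
      intro i
      constructor
      · intro hi
        refine hKclosed.mem_of_tendsto (hcoord i) (Filter.Eventually.of_forall fun m => ?_)
        have h1 : J (φ1 (φ2 m)) = Js := hφ1 (φ2 m)
        have hi' : i ∈ J (φ1 (φ2 m)) := h1 ▸ hi
        exact (Finset.mem_filter.mp hi').2
      · intro hsi
        by_contra hni
        have hmemK' : ∀ m, r (φ1 (φ2 m)) i ∈ K' := by
          intro m
          rcases hrK (φ1 (φ2 m)) i with h | h
          · exfalso
            apply hni
            have h1 : J (φ1 (φ2 m)) = Js := hφ1 (φ2 m)
            rw [← h1, hJ]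
            exact Finset.mem_filter.mpr ⟨Finset.mem_univ i, h⟩
          · exact h
        have : s i ∈ K' :=
          hK'closed.mem_of_tendsto (hcoord i) (Filter.Eventually.of_forall hmemK')
        exact Set.disjoint_left.mp hdisj hsi this
    -- contradiction on counts
    have hft0 : f t0 = Js.card := by
      rw [hf]
      simp only
      rw [hroots0, count_filter_map]
      congr 1
      ext i
      simp [hsK i]
    have hftk : f (u (φ1 (φ2 0))) = Js.card := by
      rw [hf]
      simp only
      rw [hr1, count_filter_map]
      have : Finset.univ.filter (fun i => r (φ1 (φ2 0)) i ∈ K) = J (φ1 (φ2 0)) := rfl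
      rw [this, hφ1 (φ2 0)]
    exact hfu (φ1 (φ2 0)) (hftk.trans hft0.symm)
  -- continuity and constancy
  have hcontOn : ContinuousOn f (Set.Icc (0:ℝ) 1) := by
    intro t0 ht0
    have h := hloc t0 ht0
    have h2 : Filter.Tendsto f (nhdsWithin t0 (Set.Icc (0:ℝ) 1)) (pure (f t0)) :=
      Filter.tendsto_pure.mpr h
    exact h2.mono_right (pure_le_nhds _)
  have hconst : f 1 = f 0 :=
    isPreconnected_Icc.constant hcontOn (Set.right_mem_Icc.mpr zero_le_one)
      (Set.left_mem_Icc.mpr zero_le_one)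
  -- evaluate at the endpoints
  have hf1 : f 1 = Multiset.card ((A + H).charpoly.roots.filter (· ∈ K)) := by
    rw [hf]
    norm_num
  have hf0 : f 0 = I.card := by
    rw [hf]
    simp only [Complex.ofReal_zero, zero_smul, add_zero]
    have hroots : A.charpoly.roots = Multiset.map d Finset.univ.val := by
      rw [hA, hD, charpoly_conj_diag P hP d, roots_prod_X_sub_C']
    rw [hroots, count_filter_map]
    congr 1
    ext i
    simp only [Finset.mem_filter, Finset.mem_univ, true_and]
    constructor
    · intro hdi
      by_contra hni
      have : d i ∈ K' := Set.mem_iUnion₂.mpr ⟨i, Finset.mem_compl.mpr hni,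
        Metric.mem_closedBall.mpr (by simpa using hεnn)⟩
      exact Set.disjoint_left.mp hdisj hdi this
    · intro hi
      exact Set.mem_iUnion₂.mpr ⟨i, hi, Metric.mem_closedBall.mpr (by simpa using hεnn)⟩
  rw [← hf1, hconst, hf0]
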